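/- Let G be a group and f : G → Z(G) a homomorphism. Then the following are equivalent: (I) f is invertible in the monoid Hom(G, Z(G)) with multiplication (f*g)(w) = f(w)g(w)(f∘g)(w)⁻¹; (II) the endomorphism f♭ : w ↦ w·f(w)⁻¹ is an automorphism of G; (III) the restriction of f♭ to Z(G) is an automorphism of Z(G). -/

import Mathlib

/-- `f♭(w) = w · f(w)⁻¹`. -/
def flatFun {G : Type*} [Group G] (f : G → Subgroup.center G) : G → G :=
  fun w => w * ((f w : G))⁻¹

/-- `(f*g)(w) = f(w) · g(w) · f(g(w))⁻¹`. -/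
def starFun {G : Type*} [Group G] (f g : G → Subgroup.center G) :
    G → Subgroup.center G :=
  fun w => f w * g w * (f ((g w : G)))⁻¹

section aux

variable {G : Type*} [Group G]

open scoped IsMulCommutative

lemma center_comm (z : Subgroup.center G) (g : G) : g * (z : G) = (z : G) * g :=
  Subgroup.mem_center_iff.mp z.2 g

lemma center_commute (z : Subgroup.center G) (g : G) : Commute (z : G) g :=
  (center_comm z g).symm

/-- `f♭` as a monoid hom. -/
def flatHom (f : G →* Subgroup.center G) : G →* G where
  toFun := flatFun ⇑f
  map_one' := by simp [flatFun]
  map_mul' v w := by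
    simp only [flatFun, map_mul]
    push_cast
    rw [mul_inv_rev]
    have h1 : ((f v : G))⁻¹ * (w * ((f w : G))⁻¹) = w * ((f w : G))⁻¹ * ((f v : G))⁻¹ :=
      ((center_commute (f v) (w * ((f w : G))⁻¹)).inv_left).eq
    rw [mul_assoc v ((f v : G))⁻¹, h1]
    group

/-- If `f * g = 1` in the monoid, then `f♭ ∘ g♭ = id`. -/
lemma flat_comp_eq_id (f g : G →* Subgroup.center G)
    (h : starFun ⇑f ⇑g = fun _ => 1) (w : G) :
    flatFun ⇑f (flatFun ⇑g w) = w := by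
  have h1 : (f w : G) * (g w : G) * ((f ((g w : G)) : G))⁻¹ = 1 := by
    have := congrFun h w
    simpa [starFun] using congrArg (Subtype.val) this
  have hC : (f ((g w : G)) : G) = (f w : G) * (g w : G) :=
    (mul_inv_eq_one.mp h1).symm
  have hAB : (f w : G) * (g w : G) = (g w : G) * (f w : G) :=
    (center_commute (f w) ((g w : G))).eq
  simp only [flatFun, map_mul, map_inv]
  push_cast
  rw [hC]
  calc w * ((g w : G))⁻¹ * ((f w : G) * ((f w : G) * (g w : G))⁻¹)⁻¹
      = w * (((g w : G))⁻¹ * (((f w : G) * (g w : G)) * ((f w : G))⁻¹)) := by group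
    _ = w * (((g w : G))⁻¹ * (((g w : G) * (f w : G)) * ((f w : G))⁻¹)) := by rw [hAB]
    _ = w := by group

/-- restriction of `f♭` to the center, as a monoid hom. -/
def psiHom (f : G →* Subgroup.center G) :
    Subgroup.center G →* Subgroup.center G where
  toFun z := z * (f (z : G))⁻¹
  map_one' := by simp
  map_mul' z₁ z₂ := by
    show (z₁ * z₂) * (f ((z₁ * z₂ : Subgroup.center G) : G))⁻¹ =
      (z₁ * (f (z₁ : G))⁻¹) * (z₂ * (f (z₂ : G))⁻¹)
    have : ((z₁ * z₂ : Subgroup.center G) : G) = (z₁ : G) * (z₂ : G) := rfl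
    rw [this, map_mul, mul_inv]
    exact mul_mul_mul_comm z₁ z₂ _ _

lemma I_to_II (f : G →* Subgroup.center G)
    (h : ∃ f' : G →* Subgroup.center G,
        starFun ⇑f ⇑f' = (fun _ => 1) ∧ starFun ⇑f' ⇑f = (fun _ => 1)) :
    ∃ F : G ≃* G, ⇑F = flatFun ⇑f := by
  obtain ⟨f', h1, h2⟩ := h
  refine ⟨{ toFun := flatFun ⇑f, invFun := flatFun ⇑f',
            left_inv := fun w => flat_comp_eq_id f' f h2 w,
            right_inv := fun w => flat_comp_eq_id f f' h1 w,
            map_mul' := (flatHom f).map_mul }, rfl⟩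

lemma II_to_III (f : G →* Subgroup.center G)
    (h : ∃ F : G ≃* G, ⇑F = flatFun ⇑f) :
    Function.Bijective (fun z : Subgroup.center G => z * (f (z : G))⁻¹) := by
  obtain ⟨F, hF⟩ := h
  have key : ∀ z : Subgroup.center G,
      F (z : G) = ((z * (f (z : G))⁻¹ : Subgroup.center G) : G) := by
    intro z; rw [hF]; simp [flatFun]
  constructor
  · intro z₁ z₂ hz
    have hz' : ((z₁ * (f (z₁ : G))⁻¹ : Subgroup.center G) : G) =
        ((z₂ * (f (z₂ : G))⁻¹ : Subgroup.center G) : G) := congrArg Subtype.val hz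
    have : F (z₁ : G) = F (z₂ : G) := by rw [key, key, hz']
    exact Subtype.ext (F.injective this)
  · intro z
    obtain ⟨w, hw⟩ := F.surjective (z : G)
    have hwc : w ∈ Subgroup.center G := by
      rw [Subgroup.mem_center_iff]
      intro g
      apply F.injective
      rw [map_mul, map_mul, hw, center_comm z (F g)]
    refine ⟨⟨w, hwc⟩, Subtype.ext ?_⟩
    show w * ((f w : G))⁻¹ = (z : G)
    rw [← hw, hF]
    rfl

lemma III_to_I (f : G →* Subgroup.center G)
    (h : Function.Bijective (fun z : Subgroup.center G => z * (f (z : G))⁻¹)) :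
    ∃ f' : G →* Subgroup.center G,
        starFun ⇑f ⇑f' = (fun _ => 1) ∧ starFun ⇑f' ⇑f = (fun _ => 1) := by
  have hb : Function.Bijective (psiHom f) := h
  let ψ : Subgroup.center G ≃* Subgroup.center G := MulEquiv.ofBijective (psiHom f) hb
  have hψ : ∀ z, ψ z = z * (f (z : G))⁻¹ := fun z => rfl
  refine ⟨ψ.symm.toMonoidHom.comp ((invMonoidHom).comp f), ?_, ?_⟩
  · funext w
    show f w * ψ.symm (f w)⁻¹ * (f ((ψ.symm (f w)⁻¹ : Subgroup.center G) : G))⁻¹ = 1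
    have h2 : ψ (ψ.symm (f w)⁻¹) = (f w)⁻¹ := ψ.apply_symm_apply _
    rw [hψ] at h2
    rw [mul_assoc, h2, mul_inv_cancel]
  · funext w
    show ψ.symm (f w)⁻¹ * f w * (ψ.symm (f ((f w : G)))⁻¹)⁻¹ = 1
    have key : ψ.symm (f ((f w : G)))⁻¹ = ψ.symm (f w)⁻¹ * f w := by
      apply ψ.injective
      rw [ψ.apply_symm_apply, map_mul, ψ.apply_symm_apply, hψ, inv_mul_cancel_left]
    rw [key, mul_inv_cancel]

end aux

/-- For a homomorphism `f : G → Z(G)`, the following are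
equivalent: (I) `f` is invertible in the monoid `Hom(G, Z(G))` under `*`;
(II) `f♭` is an automorphism of `G`; (III) the restriction of `f♭` to `Z(G)` is
an automorphism of `Z(G)`. -/
theorem stmt_2 {G : Type*} [Group G] (f : G →* Subgroup.center G) :
    ((∃ f' : G →* Subgroup.center G,
        starFun ⇑f ⇑f' = (fun _ => 1) ∧ starFun ⇑f' ⇑f = (fun _ => 1)) ↔
      (∃ F : G ≃* G, ⇑F = flatFun ⇑f)) ∧
    ((∃ F : G ≃* G, ⇑F = flatFun ⇑f) ↔
      Function.Bijective (fun z : Subgroup.center G => z * (f (z : G))⁻¹)) := by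
  exact ⟨⟨I_to_II f, fun h => III_to_I f (II_to_III f h)⟩,
    ⟨II_to_III f, fun h => I_to_II f (III_to_I f h)⟩⟩
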